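/- Let p ≡ 3 (mod 4) be prime and let b₁, b₂ ∈ ℚ^× with v_p(b₁) ≠ v_p(b₂) (v_p the p-adic valuation), and a₁, a₂ ∈ ℚ. Let ρᵢ = Cᵢ J Cᵢ⁻¹ with Cᵢ = [[bᵢ, aᵢ],[0,1]] and J = [[0,-1],[1,0]]. Then the group generated by ρ₁ and ρ₂ in GL₂(ℚ_p) stabilizes no vertex of the Bruhat–Tits tree T_p of SL₂(ℚ_p); equivalently, ρ₁ρ₂ fixes no vertex of T_p. -/

import Mathlib

open Matrix

variable {K : Type*} [Field K]

/- `matMap O g L` is the image of the O-lattice L ⊆ K² under the matrix g. -/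
noncomputable def matMap (O : Subring K) (g : Matrix (Fin 2) (Fin 2) K)
    (L : Submodule O (Fin 2 → K)) : Submodule O (Fin 2 → K) :=
  Submodule.map ((Matrix.toLin' g).restrictScalars O) L

/- A lattice in K² is a finitely generated O-submodule spanning K² over K. -/
def IsLattice (O : Subring K) (L : Submodule O (Fin 2 → K)) : Prop :=
  L.FG ∧ Submodule.span K (L : Set (Fin 2 → K)) = ⊤

/- Two lattices are equivalent (define the same vertex of the tree T_v) iff
they differ by a scalar in K^×. -/
noncomputable def LatEquiv (O : Subring K) (L L' : Submodule O (Fin 2 → K)) : Prop :=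
  ∃ c : K, c ≠ 0 ∧ matMap O (c • (1 : Matrix (Fin 2) (Fin 2) K)) L = L'

/- g fixes the vertex [L] of the tree T_v iff g·L is equivalent to L. -/
noncomputable def FixesClass (O : Subring K) (g : Matrix (Fin 2) (Fin 2) K)
    (L : Submodule O (Fin 2 → K)) : Prop :=
  LatEquiv O (matMap O g L) L

/- The standard lattice O² ⊆ K². -/
noncomputable def stdLat (O : Subring K) : Submodule O (Fin 2 → K) :=
  Submodule.span O (Set.range fun i : Fin 2 => (Pi.single i 1 : Fin 2 → K))

/-! ### Auxiliary lemmas -/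

lemma matMap_mul (O : Subring K) (g h : Matrix (Fin 2) (Fin 2) K)
    (L : Submodule O (Fin 2 → K)) : matMap O (g * h) L = matMap O g (matMap O h L) := by
  unfold matMap
  rw [Matrix.toLin'_mul, LinearMap.restrictScalars_comp, Submodule.map_comp]

lemma matMap_one (O : Subring K) (L : Submodule O (Fin 2 → K)) : matMap O 1 L = L := by
  unfold matMap
  rw [Matrix.toLin'_one]
  exact Submodule.map_id L

lemma fixes_smul_eq (O : Subring K) (g : Matrix (Fin 2) (Fin 2) K)
    (L : Submodule O (Fin 2 → K)) (c : K)
    (h : matMap O (c • (1 : Matrix (Fin 2) (Fin 2) K)) (matMap O g L) = L) :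
    matMap O (c • g) L = L := by
  have e : (c • (1 : Matrix (Fin 2) (Fin 2) K)) * g = c • g := by
    rw [Matrix.smul_mul, one_mul]
  rw [← e, matMap_mul]
  exact h

lemma fixes_mul (O : Subring K) (g g' : Matrix (Fin 2) (Fin 2) K)
    (L : Submodule O (Fin 2 → K)) (hg : FixesClass O g L) (hg' : FixesClass O g' L) :
    FixesClass O (g * g') L := by
  obtain ⟨c, hc, hcL⟩ := hg
  obtain ⟨c', hc', hcL'⟩ := hg'
  refine ⟨c * c', mul_ne_zero hc hc', ?_⟩
  have h1 : matMap O (c • g) L = L := fixes_smul_eq O g L c hcL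
  have h2 : matMap O (c' • g') L = L := fixes_smul_eq O g' L c' hcL'
  have key : (c * c') • (1 : Matrix (Fin 2) (Fin 2) K) * (g * g') = (c • g) * (c' • g') := by
    rw [Matrix.smul_mul, Matrix.smul_mul, Matrix.mul_smul, one_mul, smul_smul]
  rw [← matMap_mul, key, matMap_mul, h2, h1]

section Padic

variable {p : ℕ} [Fact p.Prime]

lemma mem_padic_subring {x : ℚ_[p]} : x ∈ PadicInt.subring p ↔ ‖x‖ ≤ 1 := Iff.rfl

noncomputable def toSub (p : ℕ) [Fact p.Prime] : ℤ_[p] →+* (PadicInt.subring p) where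
  toFun x := ⟨x.1, x.2⟩
  map_one' := rfl
  map_mul' _ _ := rfl
  map_zero' := rfl
  map_add' _ _ := rfl

instance : IsPrincipalIdealRing (PadicInt.subring p) :=
  IsPrincipalIdealRing.of_surjective (toSub p) (fun y => ⟨⟨y.1, y.2⟩, rfl⟩)

instance : NoZeroSMulDivisors (PadicInt.subring p) (Fin 2 → ℚ_[p]) := by
  constructor
  intro c x h
  rcases eq_or_ne c 0 with rfl|hc
  · exact Or.inl rfl
  · refine Or.inr ?_
    funext i
    have := congrFun h i
    have hc' : (c : ℚ_[p]) ≠ 0 := Subtype.coe_injective.ne hc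
    simpa [Subring.smul_def, hc'] using this

lemma exists_pow_mul_norm_le (x : ℚ_[p]) : ∃ n : ℕ, ‖(p : ℚ_[p])^n * x‖ ≤ 1 := by
  have hp1 : (1:ℝ) < p := by exact_mod_cast (Fact.out : p.Prime).one_lt
  obtain ⟨n, hn⟩ := pow_unbounded_of_one_lt ‖x‖ hp1
  refine ⟨n, ?_⟩
  rw [norm_mul, Padic.norm_p_pow]
  rw [_root_.zpow_neg, zpow_natCast, inv_mul_le_one₀ (by positivity)]
  exact_mod_cast hn.le

lemma exists_pow_mul_norm_le_forall {ι : Type*} [Fintype ι] (g : ι → ℚ_[p]) :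
    ∃ n : ℕ, ∀ i, ‖(p : ℚ_[p])^n * g i‖ ≤ 1 := by
  choose f hf using fun i => exists_pow_mul_norm_le (g i)
  refine ⟨Finset.univ.sup f, fun i => ?_⟩
  have h1 : (p : ℚ_[p]) ^ (Finset.univ.sup f) * g i
      = (p : ℚ_[p]) ^ (Finset.univ.sup f - f i) * ((p:ℚ_[p]) ^ (f i) * g i) := by
    rw [← mul_assoc, ← pow_add]
    congr 2
    have : f i ≤ Finset.univ.sup f := Finset.le_sup (Finset.mem_univ i)
    omega
  rw [h1, norm_mul]
  have h2 : ‖(p:ℚ_[p]) ^ (Finset.univ.sup f - f i)‖ ≤ 1 := by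
    rw [Padic.norm_p_pow, _root_.zpow_neg]
    apply inv_le_one_of_one_le₀
    have hp1 : (1:ℝ) ≤ p := by exact_mod_cast (Fact.out : p.Prime).one_lt.le
    exact one_le_zpow₀ hp1 (by positivity)
  calc ‖(p:ℚ_[p]) ^ (Finset.univ.sup f - f i)‖ * ‖(p:ℚ_[p]) ^ (f i) * g i‖
      ≤ 1 * 1 := mul_le_mul h2 (hf i) (norm_nonneg _) zero_le_one
    _ = 1 := by ring

set_option maxHeartbeats 1000000 in
set_option synthInstance.maxHeartbeats 200000 in
lemma stab_int (L : Submodule (PadicInt.subring p) (Fin 2 → ℚ_[p]))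
    (hL : IsLattice (PadicInt.subring p) L) (h : Matrix (Fin 2) (Fin 2) ℚ_[p])
    (hh : matMap (PadicInt.subring p) h L = L) :
    ‖h.trace‖ ≤ 1 ∧ ‖h.det‖ ≤ 1 := by
  let O := PadicInt.subring p
  haveI : Module.Finite O L := Module.Finite.iff_fg.mpr hL.1
  haveI : Module.Free O L := Module.free_of_finite_type_torsion_free'
  set b : Module.Basis (Module.Free.ChooseBasisIndex O ↥L) O ↥L := Module.Free.chooseBasis O ↥L with hb
  set w : Module.Free.ChooseBasisIndex O ↥L → (Fin 2 → ℚ_[p]) :=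
    fun i => ((b i : ↥L) : Fin 2 → ℚ_[p]) with hw
  have hwL : ∀ i, w i ∈ L := fun i => (b i).2
  have hspanO : Submodule.span O (Set.range w) = L := by
    have h2 := congrArg (Submodule.map L.subtype) b.span_eq
    rw [Submodule.map_span, Submodule.map_subtype_top] at h2
    have hrg : ⇑L.subtype '' Set.range ⇑b = Set.range w := by
      rw [← Set.range_comp]; rfl
    rw [hrg] at h2
    exact h2
  have hspanK : Submodule.span ℚ_[p] (Set.range w) = ⊤ := by
    rw [← Submodule.span_span_of_tower (R := O), hspanO]
    exact hL.2
  have hli : LinearIndependent ℚ_[p] w := by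
    rw [Fintype.linearIndependent_iff]
    intro g hg i
    obtain ⟨n, hn⟩ := exists_pow_mul_norm_le_forall g
    set c : Module.Free.ChooseBasisIndex O ↥L → O :=
      fun j => ⟨(p:ℚ_[p])^n * g j, hn j⟩ with hc
    have hco : ∀ j, ((c j : ℚ_[p])) = (p:ℚ_[p])^n * g j := fun j => rfl
    have hsum : ∑ j, c j • b j = 0 := by
      apply Subtype.coe_injective
      push_cast
      show ∑ j, ((c j : ℚ_[p])) • w j = 0
      have : ∑ j, ((c j : ℚ_[p])) • w j = (p:ℚ_[p])^n • ∑ j, g j • w j := by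
        rw [Finset.smul_sum]
        exact Finset.sum_congr rfl fun j _ => by rw [hco, mul_smul]
      rw [this, hg, smul_zero]
    have hz := Fintype.linearIndependent_iff.mp b.linearIndependent c hsum i
    have : (p:ℚ_[p])^n * g i = 0 := by
      have := congrArg (fun x : O => (x : ℚ_[p])) hz
      simpa [hco] using this
    have hpne : (p:ℚ_[p])^n ≠ 0 := by
      apply pow_ne_zero
      exact_mod_cast (Fact.out : p.Prime).ne_zero
    exact (mul_eq_zero.mp this).resolve_left hpne
  set B : Module.Basis (Module.Free.ChooseBasisIndex O ↥L) ℚ_[p] (Fin 2 → ℚ_[p]) :=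
    Module.Basis.mk hli (le_of_eq hspanK.symm) with hB
  have key : ∀ (x : Fin 2 → ℚ_[p]) (hx : x ∈ L) (i), B.repr x i ∈ O := by
    intro x hx i
    have hrep := b.sum_repr ⟨x, hx⟩
    have hrep' : ∑ j, ((b.repr ⟨x,hx⟩ j : ℚ_[p])) • w j = x := by
      have := congrArg (fun v : ↥L => (v : Fin 2 → ℚ_[p])) hrep
      simp only [Submodule.coe_sum, Submodule.coe_smul] at this
      exact this
    have hrw : B.repr x i = ∑ j, ((b.repr ⟨x,hx⟩ j : ℚ_[p])) * (B.repr (w j) i) := by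
      conv_lhs => rw [← hrep']
      rw [map_sum]
      simp [Finsupp.finset_sum_apply]
    rw [hrw]
    have hwB : ∀ j, B.repr (w j) = Finsupp.single j 1 := by
      intro j
      rw [show w j = B j from (Module.Basis.mk_apply hli _ j).symm, Module.Basis.repr_self]
    simp only [hwB, Finsupp.single_apply]
    rw [Finset.sum_congr rfl (fun j _ => by rw [mul_ite, mul_one, mul_zero])]
    rw [Finset.sum_ite_eq' Finset.univ i _]
    simp only [Finset.mem_univ, if_true]
    exact SetLike.coe_mem _
  set f := Matrix.toLin' h with hf
  set M := LinearMap.toMatrix B B f with hM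
  have hML : ∀ j, f (w j) ∈ L := by
    intro j
    have : f (w j) ∈ matMap O h L := ⟨w j, hwL j, rfl⟩
    rwa [hh] at this
  have hMO : ∀ i j, M i j ∈ O := by
    intro i j
    rw [hM, LinearMap.toMatrix_apply, hB, Module.Basis.mk_apply]
    exact key _ (hML j) i
  have htr : h.trace = M.trace := by
    have t1 : LinearMap.trace ℚ_[p] _ f = M.trace := LinearMap.trace_eq_matrix_trace _ B f
    have t2 : LinearMap.trace ℚ_[p] _ f = h.trace := by
      rw [LinearMap.trace_eq_matrix_trace _ (Pi.basisFun ℚ_[p] (Fin 2)) f,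
        LinearMap.toMatrix_eq_toMatrix', hf, LinearMap.toMatrix'_toLin']
    rw [← t2, t1]
  have hdet : h.det = M.det := by
    have t1 : LinearMap.det f = M.det := (LinearMap.det_toMatrix B f).symm
    have t2 : LinearMap.det f = h.det := by
      rw [← LinearMap.det_toMatrix (Pi.basisFun ℚ_[p] (Fin 2)) f,
        LinearMap.toMatrix_eq_toMatrix', hf, LinearMap.toMatrix'_toLin']
    rw [← t2, t1]
  constructor
  · rw [htr]
    have hmem : M.trace ∈ O := by
      have : M.trace = ∑ i, M i i := by simp [Matrix.trace, Matrix.diag]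
      rw [this]
      exact Subring.sum_mem _ (fun i _ => hMO i i)
    exact mem_padic_subring.mp hmem
  · rw [hdet]
    set M' : Matrix (Module.Free.ChooseBasisIndex O ↥L) (Module.Free.ChooseBasisIndex O ↥L) O :=
      fun i j => ⟨M i j, hMO i j⟩ with hM'
    have hMM : M = (O.subtype).mapMatrix M' := by ext i j; rfl
    have h1 : (O.subtype) M'.det = M.det := by rw [RingHom.map_det, ← hMM]
    have hmem : M.det ∈ O := h1 ▸ SetLike.coe_mem M'.det
    exact mem_padic_subring.mp hmem

lemma fixes_trace_norm (L : Submodule (PadicInt.subring p) (Fin 2 → ℚ_[p]))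
    (hL : IsLattice (PadicInt.subring p) L) (g : Matrix (Fin 2) (Fin 2) ℚ_[p])
    (hdet : g.det = 1) (hfix : FixesClass (PadicInt.subring p) g L) : ‖g.trace‖ ≤ 1 := by
  obtain ⟨c, hc, hcL⟩ := hfix
  have h1 : matMap (PadicInt.subring p) (c • g) L = L := fixes_smul_eq _ g L c hcL
  have hdet' : (c • g).det = c^2 := by
    rw [Matrix.det_smul, hdet, mul_one, Fintype.card_fin]
  have hdu : IsUnit (c • g).det := by
    rw [hdet']; exact isUnit_iff_ne_zero.mpr (pow_ne_zero 2 hc)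
  obtain ⟨ht1, hd1⟩ := stab_int L hL (c • g) h1
  have h2 : matMap (PadicInt.subring p) (c • g)⁻¹ L = L := by
    conv_lhs => rw [← h1]
    rw [← matMap_mul, Matrix.nonsing_inv_mul _ hdu, matMap_one]
  obtain ⟨-, hd2⟩ := stab_int L hL (c • g)⁻¹ h2
  have hd2' : ‖((c • g).det)⁻¹‖ ≤ 1 := by
    rw [← Ring.inverse_eq_inv', ← Matrix.det_nonsing_inv]; exact hd2
  have hcsq : ‖(c • g).det‖ = 1 := by
    have hne : (c • g).det ≠ 0 := by rw [hdet']; exact pow_ne_zero 2 hc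
    rw [norm_inv] at hd2'
    have hpos : 0 < ‖(c • g).det‖ := norm_pos_iff.mpr hne
    refine le_antisymm hd1 ?_
    have hinv := mul_inv_cancel₀ (ne_of_gt hpos)
    nlinarith [hd2', hpos, hinv]
  have hc1 : ‖c‖ = 1 := by
    rw [hdet', norm_pow] at hcsq
    nlinarith [norm_nonneg c]
  have htr : (c • g).trace = c * g.trace := by
    rw [Matrix.trace_smul, smul_eq_mul]
  rw [htr, norm_mul, hc1, one_mul] at ht1
  exact ht1

lemma one_add_sq_norm (hp : p % 4 = 3) (u : ℚ_[p]) (hu : ‖u‖ = 1) : ‖1 + u^2‖ = 1 := by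
  refine le_antisymm ?_ ?_
  · calc ‖1 + u^2‖ ≤ max ‖(1:ℚ_[p])‖ ‖u^2‖ := Padic.nonarchimedean _ _
      _ ≤ 1 := by rw [norm_one, norm_pow, hu]; norm_num
  · by_contra hlt
    push_neg at hlt
    set z : ℤ_[p] := ⟨u, hu.le⟩ with hz
    have hcoe : ((1 + z^2 : ℤ_[p]) : ℚ_[p]) = 1 + u^2 := by push_cast [hz]; rfl
    have hlt' : ‖(1 + z^2 : ℤ_[p])‖ < 1 := by rw [PadicInt.norm_def, hcoe]; exact hlt
    have hker : (1 + z^2) ∈ RingHom.ker (PadicInt.toZMod (p := p)) := by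
      rw [PadicInt.ker_toZMod, PadicInt.maximalIdeal_eq_span_p, Ideal.mem_span_singleton]
      exact (PadicInt.norm_lt_one_iff_dvd _).mp hlt'
    have hz0 : PadicInt.toZMod (1 + z^2) = 0 := hker
    rw [map_add, _root_.map_one, map_pow] at hz0
    have hsq : IsSquare (-1 : ZMod p) := by
      refine ⟨PadicInt.toZMod z, ?_⟩
      have : (PadicInt.toZMod z)^2 = -1 := by linear_combination hz0
      rw [← this]; ring
    exact (ZMod.exists_sq_eq_neg_one_iff.mp hsq) hp

lemma two_sq_norm (hp : p % 4 = 3) (x y : ℚ_[p]) : ‖x^2 + y^2‖ = max ‖x^2‖ ‖y^2‖ := by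
  by_cases hxy : ‖x^2‖ = ‖y^2‖
  · rcases eq_or_ne x 0 with rfl|hx
    · have : ‖y^2‖ = 0 := by rw [← hxy]; simp
      have hy : y^2 = 0 := by rwa [norm_eq_zero] at this
      simp [hy]
    · have hnx : ‖x‖ ≠ 0 := fun h => hx (norm_eq_zero.mp h)
      have huy : ‖y/x‖ = 1 := by
        rw [norm_div]
        rw [norm_pow, norm_pow] at hxy
        have h : ‖y‖ = ‖x‖ := by
          nlinarith [norm_nonneg x, norm_nonneg y]
        rw [h, div_self hnx]
      have hfact : x^2 + y^2 = x^2 * (1 + (y/x)^2) := by field_simp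
      rw [hfact, norm_mul, one_add_sq_norm hp _ huy, mul_one, hxy, max_self]
  · exact Padic.add_eq_max_of_ne hxy

lemma three_sq_norm_ge (hp : p % 4 = 3) (x y z : ℚ_[p]) (hyz : ‖z‖ < ‖y‖) :
    ‖y‖^2 ≤ ‖x^2 + y^2 + z^2‖ := by
  have h1 : ‖x^2 + y^2‖ = max ‖x^2‖ ‖y^2‖ := two_sq_norm hp x y
  have h2 : ‖y‖^2 ≤ ‖x^2 + y^2‖ := by
    rw [h1]
    calc ‖y‖^2 = ‖y^2‖ := (norm_pow y 2).symm
      _ ≤ max ‖x^2‖ ‖y^2‖ := le_max_right _ _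
  have h3 : ‖z^2‖ < ‖x^2 + y^2‖ := by
    have : ‖z^2‖ < ‖y‖^2 := by
      rw [norm_pow]
      have hz0 : 0 ≤ ‖z‖ := norm_nonneg z
      nlinarith
    linarith
  rw [Padic.add_eq_max_of_ne (ne_of_lt h3).symm, max_eq_left h3.le]
  exact h2

lemma quot_norm_gt (hp : p % 4 = 3) (x y z : ℚ_[p]) (hz : z ≠ 0) (hyz : ‖z‖ < ‖y‖) :
    1 < ‖(x^2 + y^2 + z^2) / (y * z)‖ := by
  have hy : y ≠ 0 := by
    intro h
    rw [h, norm_zero] at hyz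
    exact absurd hyz (norm_nonneg z).not_gt
  have hzn : 0 < ‖z‖ := norm_pos_iff.mpr hz
  have hyn : 0 < ‖y‖ := norm_pos_iff.mpr hy
  rw [norm_div, norm_mul]
  rw [lt_div_iff₀ (by positivity), one_mul]
  calc ‖y‖ * ‖z‖ < ‖y‖ * ‖y‖ := by nlinarith
    _ = ‖y‖^2 := by ring
    _ ≤ _ := three_sq_norm_ge hp x y z hyz

lemma rho_eq (b a : ℚ_[p]) (hb : b ≠ 0) :
    !![b, a; 0, 1] * !![0, -1; 1, 0] * (!![b, a; 0, 1])⁻¹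
      = !![a/b, -((a^2+b^2)/b); 1/b, -(a/b)] := by
  have hinv : (!![b, a; 0, 1])⁻¹ = !![b⁻¹, -(a/b); 0, 1] := by
    apply Matrix.inv_eq_right_inv
    rw [Matrix.mul_fin_two, Matrix.one_fin_two]
    ext i j
    fin_cases i <;> fin_cases j <;> simp <;> field_simp <;> ring
  rw [hinv, Matrix.mul_fin_two, Matrix.mul_fin_two]
  ext i j
  fin_cases i <;> fin_cases j <;> simp <;> field_simp <;> ring

lemma rho_det (b a : ℚ_[p]) (hb : b ≠ 0) :
    (!![a/b, -((a^2+b^2)/b); 1/b, -(a/b)]).det = 1 := by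
  rw [Matrix.det_fin_two_of]
  field_simp
  ring

lemma rho_mul_trace (b₁ a₁ b₂ a₂ : ℚ_[p]) (hb₁ : b₁ ≠ 0) (hb₂ : b₂ ≠ 0) :
    (!![a₁/b₁, -((a₁^2+b₁^2)/b₁); 1/b₁, -(a₁/b₁)]
      * !![a₂/b₂, -((a₂^2+b₂^2)/b₂); 1/b₂, -(a₂/b₂)]).trace
    = -(((a₁-a₂)^2 + b₁^2 + b₂^2) / (b₁ * b₂)) := by
  rw [Matrix.mul_fin_two, Matrix.trace_fin_two_of]
  field_simp
  ring

lemma norm_cast_ne {b₁ b₂ : ℚ} (hb₁ : b₁ ≠ 0) (hb₂ : b₂ ≠ 0)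
    (hval : padicValRat p b₁ ≠ padicValRat p b₂) :
    ‖(b₁ : ℚ_[p])‖ ≠ ‖(b₂ : ℚ_[p])‖ := by
  intro h
  apply hval
  rw [Padic.eq_padicNorm, Padic.eq_padicNorm] at h
  have h' : padicNorm p b₁ = padicNorm p b₂ := by exact_mod_cast h
  rw [padicNorm.eq_zpow_of_nonzero hb₁, padicNorm.eq_zpow_of_nonzero hb₂] at h'
  have hp1 : (1:ℚ) < p := by exact_mod_cast (Fact.out : p.Prime).one_lt
  have := zpow_right_injective₀ (by linarith : (0:ℚ) < p) (by linarith) h'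
  exact neg_injective this

end Padic

/- STATEMENT 14: p ≡ 3 (mod 4) prime, b₁, b₂ ∈ ℚ^× with different p-adic
valuations, a₁, a₂ ∈ ℚ, ρᵢ = Cᵢ J Cᵢ⁻¹ with Cᵢ = [[bᵢ,aᵢ],[0,1]] over ℚ_p.
Then the group ⟨ρ₁, ρ₂⟩ stabilizes no vertex of the Bruhat–Tits tree T_p of
SL₂(ℚ_p) (equivalently no lattice class is fixed by both ρ₁ and ρ₂);
equivalently, ρ₁ρ₂ fixes no vertex of T_p. -/
theorem stmt_14 (p : ℕ) [Fact p.Prime] (hp : p % 4 = 3)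
    (b₁ b₂ : ℚ) (a₁ a₂ : ℚ) (hb₁ : b₁ ≠ 0) (hb₂ : b₂ ≠ 0)
    (hval : padicValRat p b₁ ≠ padicValRat p b₂)
    (ρ₁ ρ₂ : Matrix (Fin 2) (Fin 2) ℚ_[p])
    (hρ₁ : ρ₁ = !![(b₁ : ℚ_[p]), (a₁ : ℚ_[p]); 0, 1] * !![0, -1; 1, 0] *
      (!![(b₁ : ℚ_[p]), (a₁ : ℚ_[p]); 0, 1])⁻¹)
    (hρ₂ : ρ₂ = !![(b₂ : ℚ_[p]), (a₂ : ℚ_[p]); 0, 1] * !![0, -1; 1, 0] *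
      (!![(b₂ : ℚ_[p]), (a₂ : ℚ_[p]); 0, 1])⁻¹) :
    (¬ ∃ L : Submodule (PadicInt.subring p) (Fin 2 → ℚ_[p]),
        IsLattice (PadicInt.subring p) L ∧
        FixesClass (PadicInt.subring p) ρ₁ L ∧
        FixesClass (PadicInt.subring p) ρ₂ L) ∧
    (∀ L : Submodule (PadicInt.subring p) (Fin 2 → ℚ_[p]),
        IsLattice (PadicInt.subring p) L →
        ¬ FixesClass (PadicInt.subring p) (ρ₁ * ρ₂) L) := by
  have hb₁' : (b₁ : ℚ_[p]) ≠ 0 := by exact_mod_cast hb₁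
  have hb₂' : (b₂ : ℚ_[p]) ≠ 0 := by exact_mod_cast hb₂
  have h₁ : ρ₁ = !![(a₁:ℚ_[p])/(b₁:ℚ_[p]),
      -((((a₁:ℚ_[p]))^2+((b₁:ℚ_[p]))^2)/(b₁:ℚ_[p])); 1/(b₁:ℚ_[p]), -((a₁:ℚ_[p])/(b₁:ℚ_[p]))] := by
    rw [hρ₁]; exact rho_eq _ _ hb₁'
  have h₂ : ρ₂ = !![(a₂:ℚ_[p])/(b₂:ℚ_[p]),
      -((((a₂:ℚ_[p]))^2+((b₂:ℚ_[p]))^2)/(b₂:ℚ_[p])); 1/(b₂:ℚ_[p]), -((a₂:ℚ_[p])/(b₂:ℚ_[p]))] := by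
    rw [hρ₂]; exact rho_eq _ _ hb₂'
  have hdet : (ρ₁ * ρ₂).det = 1 := by
    rw [Matrix.det_mul, h₁, h₂, rho_det _ _ hb₁', rho_det _ _ hb₂', mul_one]
  have htr : (ρ₁ * ρ₂).trace
      = -((((a₁:ℚ_[p])-(a₂:ℚ_[p]))^2 + ((b₁:ℚ_[p]))^2 + ((b₂:ℚ_[p]))^2)
        / ((b₁:ℚ_[p]) * (b₂:ℚ_[p]))) := by
    rw [h₁, h₂]
    exact rho_mul_trace _ _ _ _ hb₁' hb₂'
  have hgt : 1 < ‖(ρ₁ * ρ₂).trace‖ := by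
    rw [htr, norm_neg]
    rcases (norm_cast_ne hb₁ hb₂ hval).lt_or_gt with h|h
    · have e : ((((a₁:ℚ_[p])-(a₂:ℚ_[p]))^2 + ((b₁:ℚ_[p]))^2 + ((b₂:ℚ_[p]))^2)
          / ((b₁:ℚ_[p]) * (b₂:ℚ_[p])))
          = ((((a₁:ℚ_[p])-(a₂:ℚ_[p]))^2 + ((b₂:ℚ_[p]))^2 + ((b₁:ℚ_[p]))^2)
          / ((b₂:ℚ_[p]) * (b₁:ℚ_[p]))) := by ring
      rw [e]
      exact quot_norm_gt hp _ _ _ hb₁' h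
    · exact quot_norm_gt hp _ _ _ hb₂' h
  have main : ∀ L : Submodule (PadicInt.subring p) (Fin 2 → ℚ_[p]),
      IsLattice (PadicInt.subring p) L →
      ¬ FixesClass (PadicInt.subring p) (ρ₁ * ρ₂) L := by
    intro L hL hfix
    have := fixes_trace_norm L hL (ρ₁ * ρ₂) hdet hfix
    linarith
  refine ⟨?_, main⟩
  rintro ⟨L, hL, hf1, hf2⟩
  exact main L hL (fixes_mul _ _ _ _ hf1 hf2)
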